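/- For every positive integer l and every positive integer M, the shuffle relation in the case 𝐤 = ∅ reads: ζ^{⧢}_{Ŝ,M}(l) = (-1)^l Σ_{l' ≥ 0} C(l+l'-1, l') ζ^{⧢}_{Ŝ,M}(l + l') t^{l'} in ℚ[[t]]. -/

import Mathlib

open PowerSeries

/-- Depth-one `⧢`-truncated t-adic symmetric MZV
`ζ^⧢_{Ŝ,M}(k) = Σ_{0<n<M} 1/n^k + Σ_{-M<n<0} 1/(n+t)^k ∈ ℚ[[t]]`. -/
noncomputable def zetaHatSh1 (M k : ℕ) : PowerSeries ℚ :=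
  (∑ n ∈ Finset.Ioo 0 M, C (1 / (n : ℚ) ^ k))
    + ∑ m ∈ Finset.Ioo 0 M, ((C (-(m : ℚ)) + X) ^ k)⁻¹


/-- Candidate inverse of `(C a + X)^k`. -/
noncomputable def Fa (a : ℚ) (k : ℕ) : PowerSeries ℚ :=
  PowerSeries.mk fun j => (-1) ^ j * ((k + j - 1).choose j : ℚ) * a⁻¹ ^ (k + j)

lemma Fa_zero (a : ℚ) : Fa a 0 = 1 := by
  ext n
  cases n with
  | zero => simp [Fa]
  | succ n =>
    have : (0 + (n+1) - 1).choose (n+1) = 0 := Nat.choose_eq_zero_of_lt (by omega)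
    simp [Fa, this]

lemma step (a : ℚ) (ha : a ≠ 0) (k : ℕ) :
    (C a + X) * Fa a (k + 1) = Fa a k := by
  ext n
  rw [add_mul]
  cases n with
  | zero =>
    simp only [map_add, coeff_zero_X_mul, add_zero, coeff_C_mul, Fa, coeff_mk]
    simp only [pow_zero, one_mul, Nat.add_sub_cancel, Nat.choose_zero_right, Nat.cast_one,
      add_zero]
    rw [pow_succ']
    field_simp
  | succ n =>
    simp only [map_add, coeff_succ_X_mul, coeff_C_mul, Fa, coeff_mk]
    have h1 : k + 1 + (n + 1) - 1 = k + n + 1 := by omega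
    have h2 : k + 1 + n - 1 = k + n := by omega
    have h3 : k + (n + 1) - 1 = k + n := by omega
    rw [h1, h2, h3]
    have hp : (k + n + 1).choose (n + 1) = (k + n).choose n + (k + n).choose (n + 1) :=
      Nat.choose_succ_succ _ _
    have h4 : k + 1 + (n + 1) = (k + (n + 1)) + 1 := by omega
    have h5 : k + 1 + n = k + (n+1) := by omega
    rw [h4, h5, hp, pow_succ (a⁻¹)]
    push_cast
    ring_nf
    field_simp
    ring

lemma mulF (a : ℚ) (ha : a ≠ 0) : ∀ k : ℕ, (C a + X) ^ k * Fa a k = 1 := by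
  intro k
  induction k with
  | zero => simpa using Fa_zero a
  | succ k ih =>
    rw [pow_succ, mul_assoc, step a ha k]
    exact ih

lemma invk (a : ℚ) (ha : a ≠ 0) (k : ℕ) : ((C a + X) ^ k)⁻¹ = Fa a k := by
  rw [PowerSeries.inv_eq_iff_mul_eq_one]
  · rw [mul_comm]; exact mulF a ha k
  · simp [ha]

lemma coeff_invk (a : ℚ) (ha : a ≠ 0) (k j : ℕ) :
    coeff j ((C a + X) ^ k)⁻¹
      = (-1) ^ j * ((k + j - 1).choose j : ℚ) * a⁻¹ ^ (k + j) := by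
  rw [invk a ha k]; simp [Fa]

lemma coeff_one_add_X_pow (N j : ℕ) :
    coeff j ((1 + X) ^ N) = (N.choose j : ℚ) := by
  have : ((1 + X : ℚ⟦X⟧) ^ N) = (((1 + Polynomial.X : Polynomial ℚ) ^ N : Polynomial ℚ) : ℚ⟦X⟧) := by
    push_cast
    simp
  rw [this, Polynomial.coeff_coe, Polynomial.coeff_one_add_X_pow]

lemma lemA (l n : ℕ) (hn : 1 ≤ n) :
    ∑ j ∈ Finset.range (n + 1),
      (-1 : ℚ) ^ j * ((l + j - 1).choose j : ℚ) * ((l + n - 1).choose (n - j) : ℚ) = 0 := by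
  have hC1 : (C 1 : ℚ⟦X⟧) = 1 := map_one _
  have h1 : (1 + X : ℚ⟦X⟧) ^ l * Fa 1 l = 1 := by
    have := mulF 1 one_ne_zero l
    rwa [hC1] at this
  have hsplit : (1 + X : ℚ⟦X⟧) ^ (l + n - 1) = (1 + X) ^ l * (1 + X) ^ (n - 1) := by
    rw [← pow_add]; congr 1; omega
  have key : Fa 1 l * (1 + X : ℚ⟦X⟧) ^ (l + n - 1) = (1 + X) ^ (n - 1) := by
    rw [hsplit, ← mul_assoc, mul_comm (Fa 1 l), h1, one_mul]
  have := congrArg (coeff n) key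
  rw [coeff_mul, Finset.Nat.sum_antidiagonal_eq_sum_range_succ_mk] at this
  simp only [Fa, coeff_mk, coeff_one_add_X_pow, inv_one, one_pow, mul_one] at this
  rw [this]
  norm_cast
  exact Nat.choose_eq_zero_of_lt (by omega)

lemma keyCoeff (l n : ℕ) (q : ℚ) (hq : q ≠ 0) :
    coeff n (C (1 / q ^ l) + ((C (-q) + X) ^ l)⁻¹)
      = (-1 : ℚ) ^ l * ∑ l' ∈ Finset.range (n + 1),
          (((l + l' - 1).choose l' : ℕ) : ℚ) *
            coeff (n - l') (C (1 / q ^ (l + l')) + ((C (-q) + X) ^ (l + l'))⁻¹) := by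
  have hq' : (-q : ℚ) ≠ 0 := neg_ne_zero.2 hq
  simp only [map_add, coeff_C, coeff_invk _ hq']
  have hsum : ∀ l' ∈ Finset.range (n + 1),
      (((l + l' - 1).choose l' : ℕ) : ℚ) *
        ((if n - l' = 0 then 1 / q ^ (l + l') else 0)
          + (-1) ^ (n - l') * (((l + l' + (n - l') - 1).choose (n - l') : ℕ) : ℚ)
            * (-q)⁻¹ ^ (l + l' + (n - l')))
      = (if l' = n then (((l + l' - 1).choose l' : ℕ) : ℚ) * (1 / q ^ (l + l')) else 0)
        + (-1 : ℚ) ^ (l + l') * (((l + l' - 1).choose l' : ℕ) : ℚ)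
            * (((l + n - 1).choose (n - l') : ℕ) : ℚ) * q⁻¹ ^ (l + n) := by
    intro l' hl'
    rw [Finset.mem_range, Nat.lt_succ_iff] at hl'
    have e0 : (n - l' = 0) = (l' = n) := propext (by omega)
    have e1 : l + l' + (n - l') = l + n := by omega
    have e2 : l + l' + (n - l') - 1 = l + n - 1 := by omega
    simp only [e0, e1, e2, mul_add, mul_ite, mul_zero]
    congr 1
    have e3 : (-q)⁻¹ ^ (l + n) = (-1 : ℚ) ^ (l + n) * q⁻¹ ^ (l + n) := by
      rw [inv_neg, neg_pow]
    have e4 : (-1 : ℚ) ^ (n - l') * (-1 : ℚ) ^ (l + n) = (-1) ^ (l + l') := by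
      rw [← pow_add, show n - l' + (l + n) = l + l' + 2 * (n - l') from by omega,
        pow_add, pow_mul]
      norm_num
    rw [e3]
    calc (((l + l' - 1).choose l' : ℕ) : ℚ) *
          ((-1) ^ (n - l') * (((l + n - 1).choose (n - l') : ℕ) : ℚ)
            * ((-1 : ℚ) ^ (l + n) * q⁻¹ ^ (l + n)))
        = ((-1 : ℚ) ^ (n - l') * (-1 : ℚ) ^ (l + n)) *
            ((((l + l' - 1).choose l' : ℕ) : ℚ) * (((l + n - 1).choose (n - l') : ℕ) : ℚ)
              * q⁻¹ ^ (l + n)) := by ring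
      _ = _ := by rw [e4]; ring
  rw [Finset.sum_congr rfl hsum, Finset.sum_add_distrib,
    Finset.sum_ite_eq' (Finset.range (n + 1)) n]
  have hS : ∑ l' ∈ Finset.range (n + 1),
      (-1 : ℚ) ^ (l + l') * (((l + l' - 1).choose l' : ℕ) : ℚ)
        * (((l + n - 1).choose (n - l') : ℕ) : ℚ) * q⁻¹ ^ (l + n)
      = (-1 : ℚ) ^ l * q⁻¹ ^ (l + n) * (if n = 0 then 1 else 0) := by
    have : ∀ l' ∈ Finset.range (n + 1),
        (-1 : ℚ) ^ (l + l') * (((l + l' - 1).choose l' : ℕ) : ℚ)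
          * (((l + n - 1).choose (n - l') : ℕ) : ℚ) * q⁻¹ ^ (l + n)
        = ((-1 : ℚ) ^ l * q⁻¹ ^ (l + n)) *
            ((-1 : ℚ) ^ l' * (((l + l' - 1).choose l' : ℕ) : ℚ)
              * (((l + n - 1).choose (n - l') : ℕ) : ℚ)) := by
      intro l' _
      rw [pow_add]; ring
    rw [Finset.sum_congr rfl this, ← Finset.mul_sum]
    rcases Nat.eq_zero_or_pos n with rfl | hn
    · simp
    · rw [lemA l n hn, if_neg (by omega)]
  rw [hS]
  rw [if_pos (Finset.self_mem_range_succ n)]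
  rcases Nat.eq_zero_or_pos n with rfl | hn
  · simp only [if_pos rfl, Nat.add_zero, mul_one, Nat.sub_self]
    have h2 : (-q)⁻¹ ^ l = (-1 : ℚ) ^ l * q⁻¹ ^ l := by rw [inv_neg, neg_pow]
    have h3 : (1 : ℚ) / q ^ l = q⁻¹ ^ l := by rw [one_div, inv_pow]
    have h4 : (-1 : ℚ) ^ (l * 2) = 1 := Even.neg_one_pow ⟨l, by ring⟩
    rw [h2, h3]
    simp only [Nat.choose_zero_right, Nat.cast_one, pow_zero, one_mul, if_pos rfl, if_true]
    linear_combination (-(q⁻¹ ^ l)) * h4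
  · rw [if_neg (by omega), if_neg (by omega)]
    have h2 : (-q)⁻¹ ^ (l + n) = (-1 : ℚ) ^ (l + n) * q⁻¹ ^ (l + n) := by
      rw [inv_neg, neg_pow]
    have h3 : (1 : ℚ) / q ^ (l + n) = q⁻¹ ^ (l + n) := by rw [one_div, inv_pow]
    have h4 : (-1 : ℚ) ^ n * (-1 : ℚ) ^ (l + n) = (-1) ^ l := by
      rw [← pow_add, show n + (l + n) = l + 2 * n from by omega, pow_add, pow_mul]
      norm_num
    rw [h2, h3]
    linear_combination ((((l + n - 1).choose n : ℕ) : ℚ) * q⁻¹ ^ (l + n)) * h4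


/-- The shuffle relation with `𝐤 = ∅`:
`ζ^⧢_{Ŝ,M}(l) = (-1)^l Σ_{l'≥0} C(l+l'-1,l') ζ^⧢_{Ŝ,M}(l+l') t^{l'}`,
stated coefficientwise (the coefficient of `t^n` of the right-hand side is a
finite sum since each term carries a factor `t^{l'}`). -/
theorem stmt_11 (l M : ℕ) (hl : 0 < l) (hM : 0 < M) :
    ∀ n : ℕ,
      (coeff n) (zetaHatSh1 M l)
        = (-1 : ℚ) ^ l * ∑ l' ∈ Finset.range (n + 1),
            (((l + l' - 1).choose l' : ℕ) : ℚ) * (coeff (n - l')) (zetaHatSh1 M (l + l')) := by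
  have hz : ∀ k : ℕ, zetaHatSh1 M k
      = ∑ m ∈ Finset.Ioo 0 M,
          (C (1 / (m : ℚ) ^ k) + ((C (-(m : ℚ)) + X) ^ k)⁻¹) := by
    intro k
    rw [zetaHatSh1, Finset.sum_add_distrib]
  intro n
  rw [hz l, map_sum]
  have hm0 : ∀ m ∈ Finset.Ioo 0 M, ((m : ℚ) : ℚ) ≠ 0 := by
    intro m hm
    rw [Finset.mem_Ioo] at hm
    have : m ≠ 0 := by omega
    exact_mod_cast this
  calc ∑ m ∈ Finset.Ioo 0 M,
        coeff n (C (1 / (m : ℚ) ^ l) + ((C (-(m : ℚ)) + X) ^ l)⁻¹)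
      = ∑ m ∈ Finset.Ioo 0 M, (-1 : ℚ) ^ l * ∑ l' ∈ Finset.range (n + 1),
          (((l + l' - 1).choose l' : ℕ) : ℚ) *
            coeff (n - l')
              (C (1 / (m : ℚ) ^ (l + l')) + ((C (-(m : ℚ)) + X) ^ (l + l'))⁻¹) := by
        refine Finset.sum_congr rfl fun m hm => ?_
        exact keyCoeff l n (m : ℚ) (hm0 m hm)
    _ = (-1 : ℚ) ^ l * ∑ l' ∈ Finset.range (n + 1),
          (((l + l' - 1).choose l' : ℕ) : ℚ) *
            (coeff (n - l')) (zetaHatSh1 M (l + l')) := by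
        rw [← Finset.mul_sum, Finset.sum_comm]
        congr 1
        refine Finset.sum_congr rfl fun l' _ => ?_
        rw [← Finset.mul_sum, hz (l + l'), map_sum]
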